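/- There exists a set E contained in the power series ring 𝔽₃⟦t⟧ of Hausdorff dimension 1 that contains no nondegenerate three-term arithmetic progression; that is, there are no three distinct points x, y, z ∈ E with x + y + z = 0 (equivalently, x + z = 2y, since the field has characteristic 3). In particular, a Hausdorff-dimension analogue of the finite-field capset theorem fails in this limiting setting. -/

import Mathlib

open MeasureTheory
open scoped ENNReal Classical

variable (F : Type*) [Field F] [Fintype F]

/-- The distance on the field of formal Laurent series over a finite field `F` of
cardinality `q`, given by `d(x,y) = q^{-order(x-y)}` for `x ≠ y` and `d(x,x) = 0`. -/
noncomputable def laurentDist (x y : LaurentSeries F) : ℝ :=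
  if x = y then 0 else (Fintype.card F : ℝ) ^ (-(x - y).order)

lemma laurentDist_nonneg (x y : LaurentSeries F) : 0 ≤ laurentDist F x y := by
  unfold laurentDist
  split
  · exact le_refl 0
  · positivity

/-- The metric on `𝔽_q((t))` with `|x| = q^{-M}` when `x = Σ_{j ≥ M} x_j t^j`, `x_M ≠ 0`;
with this metric the ring of integers `𝔽_q⟦t⟧` has Hausdorff dimension `1`. -/
noncomputable instance LaurentSeries.metricSpace : MetricSpace (LaurentSeries F) where
  dist := laurentDist F
  dist_self x := by simp [laurentDist]
  dist_comm x y := by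
    show laurentDist F x y = laurentDist F y x
    rcases eq_or_ne x y with rfl | h
    · rfl
    · unfold laurentDist
      rw [if_neg h, if_neg h.symm, ← HahnSeries.order_neg (f := x - y), neg_sub]
  dist_triangle x y z := by
    show laurentDist F x z ≤ laurentDist F x y + laurentDist F y z
    have hq : (1 : ℝ) ≤ (Fintype.card F : ℝ) := by
      exact_mod_cast Nat.one_le_iff_ne_zero.mpr Fintype.card_ne_zero
    have hq0 : (0 : ℝ) < (Fintype.card F : ℝ) := by exact_mod_cast Fintype.card_pos
    rcases eq_or_ne x z with rfl | hxz
    · have h0 : laurentDist F x x = 0 := by simp [laurentDist]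
      rw [h0]
      exact add_nonneg (laurentDist_nonneg F x y) (laurentDist_nonneg F y x)
    · unfold laurentDist
      rw [if_neg hxz]
      rcases eq_or_ne x y with rfl | hxy
      · simp [if_neg hxz]
      rcases eq_or_ne y z with rfl | hyz
      · simp [if_neg hxy]
      rw [if_neg hxy, if_neg hyz]
      have hsub : x - z = (x - y) + (y - z) := by ring
      have h1 : min (x - y).order (y - z).order ≤ (x - z).order := by
        rw [hsub]
        exact HahnSeries.min_order_le_order_add (by rw [← hsub]; exact sub_ne_zero.mpr hxz)
      have hmax : (Fintype.card F : ℝ) ^ (-(x - z).order) ≤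
          max ((Fintype.card F : ℝ) ^ (-(x - y).order))
            ((Fintype.card F : ℝ) ^ (-(y - z).order)) := by
        rcases min_cases (x - y).order (y - z).order with ⟨hm, _⟩ | ⟨hm, _⟩
        · exact le_max_of_le_left (zpow_le_zpow_right₀ hq (neg_le_neg (hm ▸ h1)))
        · exact le_max_of_le_right (zpow_le_zpow_right₀ hq (neg_le_neg (hm ▸ h1)))
      refine hmax.trans (max_le ?_ ?_)
      · nlinarith [zpow_pos hq0 (-(y - z).order)]
      · nlinarith [zpow_pos hq0 (-(x - y).order)]
  eq_of_dist_eq_zero := by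
    intro x y h
    by_contra hne
    have h' : laurentDist F x y = 0 := h
    unfold laurentDist at h'
    rw [if_neg hne] at h'
    have : (0:ℝ) < (Fintype.card F : ℝ) ^ (-(x - y).order) := by
      apply zpow_pos
      exact_mod_cast Fintype.card_pos
    linarith

instance : Fact (Nat.Prime 3) := ⟨by norm_num⟩

/-! ### Construction of the counterexample set -/

namespace CapsetCE

open Filter PowerSeries Set MeasureTheory
open scoped NNReal ENNReal Topology

noncomputable section

abbrev F3 : Type := ZMod 3

/-! #### Forced positions: powers of 4 -/

/-- `FP n` means `n` is a power of `4` (a "forced" digit position). -/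
def FP (n : ℕ) : Prop := n ≠ 0 ∧ 4 ^ Nat.log 4 n = n

instance : DecidablePred FP := fun _ => instDecidableAnd

lemma FP_pow (i : ℕ) : FP (4 ^ i) :=
  ⟨pow_ne_zero _ (by norm_num), by rw [Nat.log_pow (by norm_num)]⟩

/-- Free positions. -/
def FR (n : ℕ) : Prop := ¬ FP n

instance : DecidablePred FR := fun _ => instDecidableNot

lemma FR_infinite : {n | FR n}.Infinite := by
  apply Set.infinite_of_injective_forall_mem (f := fun k : ℕ => 2 * 4 ^ k)
  · intro a b hab
    simp only at hab
    have := Nat.eq_of_mul_eq_mul_left (by norm_num : 0 < 2) hab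
    exact Nat.pow_right_injective (by norm_num) this
  · intro k
    intro hfp
    have h2 : 2 * 4 ^ k = 4 ^ Nat.log 4 (2 * 4 ^ k) := hfp.2.symm
    set j := Nat.log 4 (2 * 4 ^ k) with hj
    have hpos : 0 < (4:ℕ) ^ k := Nat.pow_pos (by norm_num)
    have h1 : (4:ℕ) ^ k < 4 ^ j := by omega
    have h3 : (4:ℕ) ^ j < 4 ^ (k + 1) := by
      rw [pow_succ]; omega
    have hk1 : k < j := (Nat.pow_lt_pow_iff_right (by norm_num)).1 h1
    have hk2 : j < k + 1 := (Nat.pow_lt_pow_iff_right (by norm_num)).1 h3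
    omega

/-- Enumeration of the free positions. -/
def fe (i : ℕ) : ℕ := Nat.nth FR i

lemma FR_fe (i : ℕ) : FR (fe i) := Nat.nth_mem_of_infinite FR_infinite i

lemma count_fe (i : ℕ) : Nat.count FR (fe i) = i := Nat.count_nth_of_infinite FR_infinite i

lemma fe_count {n : ℕ} (h : FR n) : fe (Nat.count FR n) = n := Nat.nth_count h

lemma fe_lt_of_lt_count {j n : ℕ} (h : j < Nat.count FR n) : fe j < n :=
  Nat.nth_lt_of_lt_count h

lemma two_mul_add_one_le (i : ℕ) : 2 * i + 1 ≤ 4 ^ i := by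
  induction i with
  | zero => norm_num
  | succ n ih =>
    have h4 : 1 ≤ 4 ^ n := Nat.one_le_pow _ _ (by norm_num)
    rw [pow_succ]; omega

lemma mul_succ_le_pow (L : ℕ) : L * (L + 1) ≤ 4 ^ L := by
  induction L with
  | zero => norm_num
  | succ n ih =>
    have h4 : 1 ≤ 4 ^ n := Nat.one_le_pow _ _ (by norm_num)
    rw [pow_succ]
    nlinarith [ih, h4]

lemma klog (K n : ℕ) : K * (Nat.log 4 n + 1) ≤ n + K * 4 ^ K := by
  rcases eq_or_ne n 0 with rfl | hn
  · have h1 : 1 ≤ 4 ^ K := Nat.one_le_pow _ _ (by norm_num)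
    have h2 : Nat.log 4 0 = 0 := Nat.log_zero_right 4
    have h3 : K * 1 ≤ K * 4 ^ K := Nat.mul_le_mul_left _ h1
    simp only [h2]
    omega
  · set L := Nat.log 4 n with hL
    have h4L : 4 ^ L ≤ n := Nat.pow_log_le_self 4 hn
    rcases le_or_gt L K with h | h
    · have h1 : K * (L + 1) ≤ K * (K + 1) := Nat.mul_le_mul_left _ (by omega)
      have h2 : K + 1 ≤ 4 ^ K := by have := two_mul_add_one_le K; omega
      have h3 : K * (K + 1) ≤ K * 4 ^ K := Nat.mul_le_mul_left _ h2
      omega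
    · have h1 : K * (L + 1) ≤ L * (L + 1) := Nat.mul_le_mul_right _ (by omega)
      have h2 := mul_succ_le_pow L
      omega

lemma count_add (n : ℕ) : Nat.count FR n + Nat.count FP n = n := by
  induction n with
  | zero => simp
  | succ n ih =>
    rw [Nat.count_succ, Nat.count_succ]
    by_cases h : FP n
    · have h' : ¬ FR n := fun hc => hc h
      simp only [if_pos h, if_neg h']
      omega
    · simp only [if_neg h, if_pos (show FR n from h)]
      omega

lemma count_FP_le (n : ℕ) : Nat.count FP n ≤ Nat.log 4 n + 1 := by
  rw [Nat.count_eq_card_filter_range]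
  have hsub : (Finset.range n).filter FP ⊆ (Finset.range (Nat.log 4 n + 1)).image (4 ^ ·) := by
    intro m hm
    rw [Finset.mem_filter, Finset.mem_range] at hm
    obtain ⟨hmn, hfp⟩ := hm
    rw [Finset.mem_image]
    refine ⟨Nat.log 4 m, ?_, hfp.2⟩
    rw [Finset.mem_range]
    have hn0 : n ≠ 0 := by omega
    have h4 : 4 ^ Nat.log 4 m ≤ n := by rw [hfp.2]; omega
    have := (Nat.le_log_iff_pow_le (by norm_num) hn0).2 h4
    omega
  calc ((Finset.range n).filter FP).card
      ≤ ((Finset.range (Nat.log 4 n + 1)).image (4 ^ ·)).card := Finset.card_le_card hsub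
    _ ≤ (Finset.range (Nat.log 4 n + 1)).card := Finset.card_image_le
    _ = Nat.log 4 n + 1 := Finset.card_range _

lemma count_FP_pow (i : ℕ) : Nat.count FP (4 ^ i) = i := by
  rw [Nat.count_eq_card_filter_range]
  have h : (Finset.range (4 ^ i)).filter FP = (Finset.range i).image (4 ^ ·) := by
    ext m
    simp only [Finset.mem_filter, Finset.mem_range, Finset.mem_image]
    constructor
    · rintro ⟨hm, hfp⟩
      refine ⟨Nat.log 4 m, ?_, hfp.2⟩
      have h4 : (4:ℕ) ^ Nat.log 4 m < 4 ^ i := by rw [hfp.2]; exact hm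
      exact (Nat.pow_lt_pow_iff_right (by norm_num)).1 h4
    · rintro ⟨j, hj, rfl⟩
      exact ⟨(Nat.pow_lt_pow_iff_right (by norm_num)).2 hj, FP_pow j⟩
  rw [h, Finset.card_image_of_injective _ (Nat.pow_right_injective (by norm_num)),
    Finset.card_range]

lemma fe_lt_pow (i : ℕ) : fe i < 4 ^ i := by
  apply fe_lt_of_lt_count
  have h1 := count_add (4 ^ i)
  have h2 := count_FP_pow i
  have h3 := two_mul_add_one_le i
  omega

lemma le_count_add (n : ℕ) : n ≤ Nat.count FR n + (Nat.log 4 n + 1) := by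
  have h1 := count_add n
  have h2 := count_FP_le n
  omega

/-! #### The embedding of power series and metric estimates -/

abbrev emb : PowerSeries F3 →+* LaurentSeries F3 := HahnSeries.ofPowerSeries ℤ F3

lemma emb_coeff (p : PowerSeries F3) (n : ℕ) :
    (emb p).coeff (n : ℤ) = PowerSeries.coeff n p :=
  HahnSeries.ofPowerSeries_apply_coeff p n

lemma emb_coeff_neg (p : PowerSeries F3) {m : ℤ} (hm : m < 0) : (emb p).coeff m = 0 := by
  rw [show emb p = _ from HahnSeries.ofPowerSeries_apply p]
  apply HahnSeries.embDomain_notin_range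
  rintro ⟨k, hk⟩
  have hk : ((k:ℕ):ℤ) = m := hk
  omega

lemma dist_emb_eq {x y : LaurentSeries F3} (h : x ≠ y) :
    dist x y = (3:ℝ) ^ (-(x - y).order) := by
  show laurentDist F3 x y = _
  unfold laurentDist
  rw [if_neg h, ZMod.card]
  norm_num

lemma dist_le_of_agree {p q : PowerSeries F3} {n : ℕ}
    (h : ∀ m, m < n → PowerSeries.coeff m p = PowerSeries.coeff m q) :
    dist (emb p) (emb q) ≤ (3:ℝ)⁻¹ ^ n := by
  rcases eq_or_ne (emb p) (emb q) with he | he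
  · rw [he, dist_self]; positivity
  · rw [dist_emb_eq he]
    have hd : emb p - emb q = emb (p - q) := (map_sub emb p q).symm
    have hne0 : emb (p - q) ≠ 0 := by
      rw [← hd]; exact sub_ne_zero.mpr he
    have horder : (n : ℤ) ≤ (emb (p - q)).order := by
      by_contra hlt
      push_neg at hlt
      have hc : (emb (p - q)).coeff (emb (p - q)).order ≠ 0 := HahnSeries.coeff_order_eq_zero.not.mpr hne0
      rcases lt_or_ge ((emb (p - q)).order) 0 with hneg | hpos
      · exact hc (emb_coeff_neg _ hneg)
      · apply hc
        have hmz : (((emb (p - q)).order.toNat : ℕ) : ℤ) = (emb (p - q)).order :=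
          Int.toNat_of_nonneg hpos
        rw [← hmz, emb_coeff, map_sub]
        have hmn : (emb (p - q)).order.toNat < n := by omega
        rw [h _ hmn, sub_self]
    rw [hd]
    calc (3:ℝ) ^ (-(emb (p - q)).order) ≤ (3:ℝ) ^ (-(n:ℤ)) :=
          zpow_le_zpow_right₀ (by norm_num) (neg_le_neg horder)
      _ = (3:ℝ)⁻¹ ^ n := by rw [zpow_neg, zpow_natCast, inv_pow]

lemma le_dist_of_ne {p q : PowerSeries F3} {n : ℕ}
    (h : PowerSeries.coeff n p ≠ PowerSeries.coeff n q) :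
    (3:ℝ)⁻¹ ^ n ≤ dist (emb p) (emb q) := by
  have hne : emb p ≠ emb q := by
    intro he; apply h
    rw [← emb_coeff, ← emb_coeff, he]
  rw [dist_emb_eq hne]
  have hd : emb p - emb q = emb (p - q) := (map_sub emb p q).symm
  have hco : (emb (p - q)).coeff ((n : ℕ) : ℤ) ≠ 0 := by
    rw [emb_coeff, map_sub]; exact sub_ne_zero.mpr h
  have horder : (emb (p - q)).order ≤ (n:ℤ) := HahnSeries.order_le_of_coeff_ne_zero hco
  rw [hd]
  calc (3:ℝ)⁻¹ ^ n = (3:ℝ) ^ (-(n:ℤ)) := by rw [zpow_neg, zpow_natCast, inv_pow]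
    _ ≤ _ := zpow_le_zpow_right₀ (by norm_num) (neg_le_neg horder)

/-! #### The set `E` -/

/-- Power series whose digit at the forced position `4 ^ i` is the square of the digit at the
`i`-th free position.  Since every free position is eventually "checked", and squares of
`{0,1,2}` sum (over any 3-AP) to `2 ≠ 0`, this set has no nondegenerate 3-term AP; since the
forced positions are very sparse, it has full Hausdorff dimension. -/
def E0 : Set (PowerSeries F3) :=
  { p | ∀ i : ℕ, PowerSeries.coeff (4 ^ i) p = (PowerSeries.coeff (fe i) p) ^ 2 }

def EE : Set (LaurentSeries F3) := (emb : PowerSeries F3 → LaurentSeries F3) '' E0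

lemma zmod3_sq (a b c : F3) (h : a + b + c = 0) (hab : a ≠ b) :
    a ^ 2 + b ^ 2 + c ^ 2 ≠ 0 := by
  revert h hab
  revert a b c
  decide

lemma no_ap : ¬ ∃ x y z : LaurentSeries F3, x ∈ EE ∧ y ∈ EE ∧ z ∈ EE ∧
    x ≠ y ∧ y ≠ z ∧ x ≠ z ∧ x + y + z = 0 := by
  rintro ⟨x, y, z, hx, hy, hz, hxy, -, -, hsum⟩
  obtain ⟨p, hp, rfl⟩ := hx
  obtain ⟨q, hq, rfl⟩ := hy
  obtain ⟨r, hr, rfl⟩ := hz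
  have hpq : p ≠ q := fun h => hxy (by rw [h])
  have hpqr : p + q + r = 0 := by
    apply HahnSeries.ofPowerSeries_injective (Γ := ℤ) (R := F3)
    rw [map_add, map_add, map_zero]
    exact hsum
  have hcoeff : ∀ n : ℕ, PowerSeries.coeff n p + PowerSeries.coeff n q
      + PowerSeries.coeff n r = 0 := by
    intro n
    have h := congrArg (PowerSeries.coeff n) hpqr
    simpa using h
  have hex : ∃ n : ℕ, PowerSeries.coeff n p ≠ PowerSeries.coeff n q := by
    by_contra hno
    push_neg at hno
    exact hpq (PowerSeries.ext hno)
  set n₀ := Nat.find hex with hn₀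
  have hne := Nat.find_spec hex
  have hmin : ∀ m, m < n₀ → PowerSeries.coeff m p = PowerSeries.coeff m q := by
    intro m hm
    exact not_not.mp (Nat.find_min hex hm)
  by_cases hfp : FP n₀
  · have hi : 4 ^ Nat.log 4 n₀ = n₀ := hfp.2
    have hplt : fe (Nat.log 4 n₀) < n₀ := by
      have := fe_lt_pow (Nat.log 4 n₀); omega
    have h1 := hp (Nat.log 4 n₀)
    have h2 := hq (Nat.log 4 n₀)
    rw [hi] at h1 h2
    rw [h1, h2, hmin _ hplt] at hne
    exact hne rfl
  · have hfr : FR n₀ := hfp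
    have hfei : fe (Nat.count FR n₀) = n₀ := fe_count hfr
    have h1 := hp (Nat.count FR n₀)
    have h2 := hq (Nat.count FR n₀)
    have h3 := hr (Nat.count FR n₀)
    rw [hfei] at h1 h2 h3
    have hs := hcoeff (4 ^ Nat.count FR n₀)
    rw [h1, h2, h3] at hs
    exact zmod3_sq _ _ _ (hcoeff n₀) hne hs

/-! #### The Hölder map to `ℝ` -/

def val3 (u : F3) : ℝ := (ZMod.val u : ℝ)

lemma val3_nonneg (u : F3) : 0 ≤ val3 u := Nat.cast_nonneg _

lemma val3_le (u : F3) : val3 u ≤ 2 := by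
  have h := ZMod.val_lt u
  unfold val3
  exact_mod_cast Nat.lt_succ_iff.mp h

def gmap (x : LaurentSeries F3) : ℝ :=
  ∑' j : ℕ, (3:ℝ)⁻¹ ^ (j + 1) * val3 (x.coeff ((fe j : ℕ) : ℤ))

lemma geom_summable : Summable (fun j : ℕ => (3:ℝ)⁻¹ ^ j) :=
  summable_geometric_of_lt_one (by norm_num) (by norm_num)

lemma gmap_term_summable (x : LaurentSeries F3) :
    Summable (fun j : ℕ => (3:ℝ)⁻¹ ^ (j + 1) * val3 (x.coeff ((fe j : ℕ) : ℤ))) := by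
  apply Summable.of_nonneg_of_le
    (fun j => mul_nonneg (by positivity) (val3_nonneg _)) _
    (geom_summable.mul_left ((3:ℝ)⁻¹ * 2))
  intro j
  calc (3:ℝ)⁻¹ ^ (j + 1) * val3 (x.coeff ((fe j : ℕ) : ℤ))
      ≤ (3:ℝ)⁻¹ ^ (j + 1) * 2 := by
        exact mul_le_mul_of_nonneg_left (val3_le _) (by positivity)
    _ = (3:ℝ)⁻¹ * 2 * (3:ℝ)⁻¹ ^ j := by ring

set_option maxHeartbeats 1000000 in
lemma gmap_diff {p q : PowerSeries F3} (n₀ : ℕ)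
    (hmin : ∀ m, m < n₀ → PowerSeries.coeff m p = PowerSeries.coeff m q) :
    |gmap (emb p) - gmap (emb q)| ≤ (3:ℝ)⁻¹ ^ (Nat.count FR n₀) := by
  set m := Nat.count FR n₀ with hm
  set w := fun j : ℕ => (3:ℝ)⁻¹ ^ (j + 1) *
      (val3 ((emb p).coeff ((fe j : ℕ) : ℤ)) - val3 ((emb q).coeff ((fe j : ℕ) : ℤ))) with hw
  have hsub : gmap (emb p) - gmap (emb q) = ∑' j, w j := by
    unfold gmap
    rw [← Summable.tsum_sub (gmap_term_summable _) (gmap_term_summable _)]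
    congr 1
    funext j
    rw [hw]
    ring
  have hwb : ∀ j, |w j| ≤ (3:ℝ)⁻¹ * 2 * (3:ℝ)⁻¹ ^ j := by
    intro j
    rw [hw]
    have hb : |val3 ((emb p).coeff ((fe j : ℕ) : ℤ)) - val3 ((emb q).coeff ((fe j : ℕ) : ℤ))| ≤ 2 := by
      rw [abs_le]
      constructor
      · have := val3_le ((emb q).coeff ((fe j : ℕ) : ℤ))
        have := val3_nonneg ((emb p).coeff ((fe j : ℕ) : ℤ))
        linarith
      · have := val3_le ((emb p).coeff ((fe j : ℕ) : ℤ))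
        have := val3_nonneg ((emb q).coeff ((fe j : ℕ) : ℤ))
        linarith
    rw [abs_mul, abs_pow, abs_inv]
    calc |(3:ℝ)|⁻¹ ^ (j+1) * |_| ≤ |(3:ℝ)|⁻¹ ^ (j+1) * 2 := by
          exact mul_le_mul_of_nonneg_left hb (by positivity)
      _ = (3:ℝ)⁻¹ * 2 * (3:ℝ)⁻¹ ^ j := by
          rw [abs_of_nonneg (by norm_num : (0:ℝ) ≤ 3)]
          ring
  have hws : Summable (fun j => |w j|) :=
    Summable.of_nonneg_of_le (fun j => abs_nonneg _) hwb (geom_summable.mul_left _)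
  have h0 : ∀ j, j < m → w j = 0 := by
    intro j hj
    have hfe : fe j < n₀ := fe_lt_of_lt_count (hm ▸ hj)
    have hcc : (emb p).coeff ((fe j : ℕ) : ℤ) = (emb q).coeff ((fe j : ℕ) : ℤ) := by
      rw [emb_coeff, emb_coeff, hmin _ hfe]
    rw [hw]
    simp [hcc]
  have habs : |gmap (emb p) - gmap (emb q)| ≤ ∑' j, |w j| := by
    rw [hsub]
    have h := norm_tsum_le_tsum_norm (f := w) (by simpa [Real.norm_eq_abs] using hws)
    simpa [Real.norm_eq_abs] using h
  have hsplit : (∑' j, |w j|) = (∑ j ∈ Finset.range m, |w j|) + ∑' j, |w (j + m)| :=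
    (Summable.sum_add_tsum_nat_add m hws).symm
  have hzero : (∑ j ∈ Finset.range m, |w j|) = 0 :=
    Finset.sum_eq_zero (fun j hj => by rw [h0 j (Finset.mem_range.1 hj), abs_zero])
  have htail : (∑' j, |w (j + m)|) ≤ (3:ℝ)⁻¹ ^ m := by
    have hsum2 : Summable (fun j : ℕ => ((3:ℝ)⁻¹ * 2 * (3:ℝ)⁻¹ ^ m) * (3:ℝ)⁻¹ ^ j) :=
      geom_summable.mul_left _
    have hle : ∀ j : ℕ, |w (j + m)| ≤ ((3:ℝ)⁻¹ * 2 * (3:ℝ)⁻¹ ^ m) * (3:ℝ)⁻¹ ^ j := by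
      intro j
      calc |w (j + m)| ≤ (3:ℝ)⁻¹ * 2 * (3:ℝ)⁻¹ ^ (j + m) := hwb (j + m)
        _ = ((3:ℝ)⁻¹ * 2 * (3:ℝ)⁻¹ ^ m) * (3:ℝ)⁻¹ ^ j := by rw [pow_add]; ring
    calc (∑' j, |w (j + m)|) ≤ ∑' j : ℕ, ((3:ℝ)⁻¹ * 2 * (3:ℝ)⁻¹ ^ m) * (3:ℝ)⁻¹ ^ j := by
          apply Summable.tsum_le_tsum hle _ hsum2
          exact (summable_nat_add_iff m).2 hws
      _ = ((3:ℝ)⁻¹ * 2 * (3:ℝ)⁻¹ ^ m) * (1 - (3:ℝ)⁻¹)⁻¹ := by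
          rw [tsum_mul_left, tsum_geometric_of_lt_one (by norm_num) (by norm_num)]
      _ = (3:ℝ)⁻¹ ^ m := by
          have h32 : (1 - (3:ℝ)⁻¹)⁻¹ = 3 / 2 := by norm_num
          rw [h32]; ring
  calc |gmap (emb p) - gmap (emb q)| ≤ ∑' j, |w j| := habs
    _ = (∑ j ∈ Finset.range m, |w j|) + ∑' j, |w (j + m)| := hsplit
    _ = ∑' j, |w (j + m)| := by rw [hzero, zero_add]
    _ ≤ (3:ℝ)⁻¹ ^ m := htail

lemma pow_inv_eq_rpow (k : ℕ) : (3:ℝ)⁻¹ ^ k = (3:ℝ) ^ (-(k:ℝ)) := by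
  rw [inv_pow, ← Real.rpow_natCast (3:ℝ) k, ← Real.rpow_neg (by norm_num)]

lemma holder_gmap (K : ℕ) (hK : 2 ≤ K) :
    HolderOnWith ((3:ℝ≥0) ^ (4 ^ K)) (((K:ℝ≥0) - 1) / (K:ℝ≥0)) gmap EE := by
  intro x hx y hy
  obtain ⟨p, hp, rfl⟩ := hx
  obtain ⟨q, hq, rfl⟩ := hy
  rcases eq_or_ne (emb p) (emb q) with he | he
  · rw [he, edist_self]
    exact zero_le
  · have hex : ∃ n : ℕ, PowerSeries.coeff n p ≠ PowerSeries.coeff n q := by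
      by_contra hno
      push_neg at hno
      exact he (congrArg emb (PowerSeries.ext hno))
    set n₀ := Nat.find hex with hn₀def
    have hne := Nat.find_spec hex
    have hmin : ∀ m, m < n₀ → PowerSeries.coeff m p = PowerSeries.coeff m q :=
      fun m hm => not_not.mp (Nat.find_min hex hm)
    set m := Nat.count FR n₀ with hmdef
    have hd1 : (3:ℝ)⁻¹ ^ n₀ ≤ dist (emb p) (emb q) := le_dist_of_ne hne
    have hg1 : |gmap (emb p) - gmap (emb q)| ≤ (3:ℝ)⁻¹ ^ m := gmap_diff n₀ hmin
    set αr : ℝ := ((K:ℝ) - 1) / (K:ℝ) with hαr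
    have hKpos : (0:ℝ) < K := by
      have : (0:ℕ) < K := by omega
      exact_mod_cast this
    have hα0 : 0 ≤ αr := by
      apply div_nonneg _ hKpos.le
      have : (1:ℝ) ≤ K := by exact_mod_cast (by omega : 1 ≤ K)
      linarith
    have hnat : (K:ℝ) * n₀ ≤ K * m + n₀ + K * 4 ^ K := by
      have h1 : K * n₀ ≤ K * m + K * (Nat.log 4 n₀ + 1) := by
        have h := le_count_add n₀
        calc K * n₀ ≤ K * (m + (Nat.log 4 n₀ + 1)) := Nat.mul_le_mul_left _ h
          _ = K * m + K * (Nat.log 4 n₀ + 1) := by ring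
      have h2 := klog K n₀
      have h3 : K * n₀ ≤ K * m + n₀ + K * 4 ^ K := by omega
      exact_mod_cast h3
    have hexp : αr * n₀ ≤ 4 ^ K + m := by
      rw [hαr, div_mul_eq_mul_div, div_le_iff₀ hKpos]
      nlinarith [hnat]
    have hmain : |gmap (emb p) - gmap (emb q)| ≤
        (3:ℝ) ^ (4 ^ K) * (dist (emb p) (emb q)) ^ αr := by
      have hstep : (3:ℝ)⁻¹ ^ m ≤ (3:ℝ) ^ (4 ^ K) * ((3:ℝ)⁻¹ ^ n₀) ^ αr := by
        rw [pow_inv_eq_rpow, pow_inv_eq_rpow, ← Real.rpow_natCast (3:ℝ) (4 ^ K),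
          ← Real.rpow_mul (by norm_num), ← Real.rpow_add (by norm_num)]
        rw [Real.rpow_le_rpow_left_iff (by norm_num)]
        have hre : (-(n₀:ℝ)) * αr = -(αr * n₀) := by ring
        rw [hre]
        push_cast
        push_cast at hexp
        linarith
      have hdist : ((3:ℝ)⁻¹ ^ n₀) ^ αr ≤ (dist (emb p) (emb q)) ^ αr :=
        Real.rpow_le_rpow (by positivity) hd1 hα0
      calc |gmap (emb p) - gmap (emb q)| ≤ (3:ℝ)⁻¹ ^ m := hg1
        _ ≤ (3:ℝ) ^ (4 ^ K) * ((3:ℝ)⁻¹ ^ n₀) ^ αr := hstep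
        _ ≤ _ := mul_le_mul_of_nonneg_left hdist (by positivity)
    have hdpos : 0 < dist (emb p) (emb q) := dist_pos.mpr he
    have h1K : (1:ℝ≥0) ≤ (K:ℝ≥0) := by exact_mod_cast (by omega : 1 ≤ K)
    have hcoe : ((((K:ℝ≥0) - 1) / (K:ℝ≥0) : ℝ≥0) : ℝ) = αr := by
      rw [NNReal.coe_div, NNReal.coe_sub h1K]
      simp [hαr]
    rw [edist_dist, edist_dist, hcoe, ENNReal.ofReal_rpow_of_pos hdpos]
    have hC : (((3:ℝ≥0) ^ (4 ^ K) : ℝ≥0) : ℝ≥0∞) = ENNReal.ofReal ((3:ℝ) ^ (4 ^ K)) := by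
      rw [← ENNReal.ofReal_coe_nnreal]
      norm_num
    rw [hC, ← ENNReal.ofReal_mul (by positivity)]
    apply ENNReal.ofReal_le_ofReal
    rw [Real.dist_eq]
    exact hmain

/-! #### Realizing all of `[0,1]` -/

def digFun (a : ℕ → ℕ) : ℕ → F3 := fun n =>
  if FP n then ((a (Nat.log 4 n) : F3)) ^ 2 else (a (Nat.count FR n) : F3)

def digPS (a : ℕ → ℕ) : PowerSeries F3 := PowerSeries.mk (digFun a)

lemma digPS_mem (a : ℕ → ℕ) : digPS a ∈ E0 := by
  intro i
  rw [digPS, PowerSeries.coeff_mk, PowerSeries.coeff_mk]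
  unfold digFun
  rw [if_pos (FP_pow i), if_neg (FR_fe i), Nat.log_pow (by norm_num), count_fe]

lemma coeff_digPS_fe (a : ℕ → ℕ) (ha : ∀ j, a j < 3) (j : ℕ) :
    val3 ((emb (digPS a)).coeff ((fe j : ℕ) : ℤ)) = (a j : ℝ) := by
  rw [emb_coeff, digPS, PowerSeries.coeff_mk]
  unfold digFun
  rw [if_neg (FR_fe j), count_fe]
  unfold val3
  rw [ZMod.val_natCast_of_lt (ha j)]

lemma gmap_digPS {a : ℕ → ℕ} (ha : ∀ j, a j < 3) {r : ℝ}
    (hs : HasSum (fun j => (3:ℝ)⁻¹ ^ (j + 1) * (a j : ℝ)) r) :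
    gmap (emb (digPS a)) = r := by
  unfold gmap
  rw [show (fun j : ℕ => (3:ℝ)⁻¹ ^ (j + 1) * val3 ((emb (digPS a)).coeff ((fe j : ℕ) : ℤ)))
      = fun j => (3:ℝ)⁻¹ ^ (j + 1) * (a j : ℝ) from funext fun j => by
        rw [coeff_digPS_fe a ha j]]
  exact hs.tsum_eq

lemma exists_expansion {r : ℝ} (h0 : 0 ≤ r) (h1 : r ≤ 1) :
    ∃ a : ℕ → ℕ, (∀ j, a j < 3) ∧ HasSum (fun j => (3:ℝ)⁻¹ ^ (j + 1) * (a j : ℝ)) r := by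
  rcases h1.eq_or_lt with heq | hlt
  · refine ⟨fun _ => 2, fun _ => by norm_num, ?_⟩
    subst heq
    have hg : HasSum (fun j : ℕ => (3:ℝ)⁻¹ ^ j) (1 - (3:ℝ)⁻¹)⁻¹ :=
      hasSum_geometric_of_lt_one (by norm_num) (by norm_num)
    have hg2 := hg.mul_left ((3:ℝ)⁻¹ * 2)
    have hfe : (fun j : ℕ => (3:ℝ)⁻¹ * 2 * (3:ℝ)⁻¹ ^ j)
        = fun j : ℕ => (3:ℝ)⁻¹ ^ (j + 1) * ((2:ℕ) : ℝ) := by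
      funext j
      push_cast
      ring
    rw [hfe] at hg2
    have hval : (3:ℝ)⁻¹ * 2 * (1 - (3:ℝ)⁻¹)⁻¹ = 1 := by norm_num
    rw [hval] at hg2
    exact hg2
  · set D : ℕ → ℤ := fun n => ⌊r * 3 ^ (n + 1)⌋ - 3 * ⌊r * 3 ^ n⌋ with hD
    have hD0 : ∀ n, 0 ≤ D n := by
      intro n
      have hf : ((3 * ⌊r * 3 ^ n⌋ : ℤ) : ℝ) ≤ r * 3 ^ (n + 1) := by
        push_cast
        have h := Int.floor_le (r * 3 ^ n)
        rw [pow_succ]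
        nlinarith
      have h2 := Int.le_floor.mpr hf
      simp only [hD]
      omega
    have hD2 : ∀ n, D n ≤ 2 := by
      intro n
      have h1' : r * 3 ^ (n + 1) < ((3 * ⌊r * 3 ^ n⌋ + 3 : ℤ) : ℝ) := by
        push_cast
        have h := Int.lt_floor_add_one (r * 3 ^ n)
        rw [pow_succ]
        nlinarith
      have h2 := Int.floor_lt.mpr h1'
      simp only [hD]
      omega
    set a : ℕ → ℕ := fun n => (D n).toNat with ha
    have haD : ∀ n, ((a n : ℕ) : ℝ) = ((D n : ℤ) : ℝ) := by
      intro n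
      have h := Int.toNat_of_nonneg (hD0 n)
      exact_mod_cast congrArg (fun z : ℤ => (z : ℝ)) h
    have halt : ∀ n, a n < 3 := by
      intro n
      have h1' := hD2 n
      have h2' := hD0 n
      simp only [ha]
      omega
    have hpart : ∀ n : ℕ, (∑ j ∈ Finset.range n, (3:ℝ)⁻¹ ^ (j + 1) * (a j : ℝ))
        = (⌊r * 3 ^ n⌋ : ℝ) / 3 ^ n := by
      intro n
      induction n with
      | zero =>
        simp only [Finset.range_zero, Finset.sum_empty, pow_zero, mul_one, div_one]
        rw [Int.floor_eq_zero_iff.mpr ⟨h0, hlt⟩]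
        simp
      | succ n ih =>
        rw [Finset.sum_range_succ, ih, haD]
        simp only [hD]
        push_cast
        have h3 : (3:ℝ) ^ n ≠ 0 := by positivity
        have h3' : (3:ℝ) ^ (n + 1) ≠ 0 := by positivity
        rw [inv_pow]
        field_simp
        ring
    have hsumm : Summable (fun j : ℕ => (3:ℝ)⁻¹ ^ (j + 1) * (a j : ℝ)) := by
      apply Summable.of_nonneg_of_le (fun j => by positivity) _
        (geom_summable.mul_left ((3:ℝ)⁻¹ * 2))
      intro j
      have hj := halt j
      calc (3:ℝ)⁻¹ ^ (j + 1) * (a j : ℝ) ≤ (3:ℝ)⁻¹ ^ (j + 1) * 2 := by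
            apply mul_le_mul_of_nonneg_left _ (by positivity)
            exact_mod_cast Nat.lt_succ_iff.mp hj
        _ = (3:ℝ)⁻¹ * 2 * (3:ℝ)⁻¹ ^ j := by ring
    have htend : Tendsto (fun n => ∑ j ∈ Finset.range n, (3:ℝ)⁻¹ ^ (j + 1) * (a j : ℝ))
        atTop (𝓝 r) := by
      rw [show (fun n => ∑ j ∈ Finset.range n, (3:ℝ)⁻¹ ^ (j + 1) * (a j : ℝ))
          = fun n => (⌊r * 3 ^ n⌋ : ℝ) / 3 ^ n from funext hpart]
      rw [tendsto_iff_dist_tendsto_zero]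
      apply squeeze_zero (fun n => dist_nonneg) (g := fun n => (3:ℝ)⁻¹ ^ n)
      · intro n
        have ht : (0:ℝ) < 3 ^ n := by positivity
        have hfl := Int.floor_le (r * 3 ^ n)
        have hfu := Int.lt_floor_add_one (r * 3 ^ n)
        have hinv : (3:ℝ)⁻¹ ^ n * 3 ^ n = 1 := by
          rw [inv_pow]
          field_simp
        have hA : (⌊r * 3 ^ n⌋ : ℝ) / 3 ^ n ≤ r := by
          rw [div_le_iff₀ ht]; exact hfl
        have hB : r - (3:ℝ)⁻¹ ^ n ≤ (⌊r * 3 ^ n⌋ : ℝ) / 3 ^ n := by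
          rw [le_div_iff₀ ht, sub_mul, hinv]
          linarith
        rw [Real.dist_eq, abs_le]
        constructor
        · linarith
        · have hpos : (0:ℝ) ≤ (3:ℝ)⁻¹ ^ n := by positivity
          linarith
      · exact tendsto_pow_atTop_nhds_zero_of_lt_one (by norm_num) (by norm_num)
    have htsum : (∑' j, (3:ℝ)⁻¹ ^ (j + 1) * (a j : ℝ)) = r :=
      tendsto_nhds_unique hsumm.hasSum.tendsto_sum_nat htend
    exact ⟨a, halt, htsum ▸ hsumm.hasSum⟩

lemma Icc_subset_gmap : Set.Icc (0:ℝ) 1 ⊆ gmap '' EE := by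
  rintro r ⟨h0, h1⟩
  obtain ⟨a, ha, hs⟩ := exists_expansion h0 h1
  exact ⟨emb (digPS a), ⟨digPS a, digPS_mem a, rfl⟩, gmap_digPS ha hs⟩

/-! #### Dimension bounds -/

lemma one_le_dimH_EE : (1 : ℝ≥0∞) ≤ dimH EE := by
  apply ENNReal.le_of_forall_nnreal_lt
  intro ρ hρ
  have hρ1 : (ρ:ℝ) < 1 := by exact_mod_cast hρ
  obtain ⟨K', hK'⟩ := exists_nat_ge (1 / (1 - (ρ:ℝ)))
  set K := K' + 2 with hKdef
  have hK : 2 ≤ K := by omega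
  have hKf : (1:ℝ) / (1 - ρ) ≤ K := by
    have h : (K':ℝ) ≤ K := by exact_mod_cast (by omega : K' ≤ K)
    linarith
  have hKpos : (0:ℝ) < K := by
    have : (0:ℕ) < K := by omega
    exact_mod_cast this
  have hρα : (ρ:ℝ) ≤ ((K:ℝ) - 1) / K := by
    rw [le_div_iff₀ hKpos]
    have h1ρ : 0 < 1 - (ρ:ℝ) := by linarith
    have h2 := (div_le_iff₀ h1ρ).mp hKf
    nlinarith
  set α : ℝ≥0 := ((K:ℝ≥0) - 1) / (K:ℝ≥0) with hα
  have h1K : (1:ℝ≥0) ≤ (K:ℝ≥0) := by exact_mod_cast (by omega : 1 ≤ K)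
  have hαcoe : (α : ℝ) = ((K:ℝ) - 1) / K := by
    rw [hα, NNReal.coe_div, NNReal.coe_sub h1K]
    norm_num
  have hα0 : 0 < α := by
    have hr : (0:ℝ) < (α : ℝ) := by
      rw [hαcoe]
      have h2 : (2:ℝ) ≤ K := by exact_mod_cast hK
      apply div_pos <;> linarith
    exact_mod_cast hr
  have hHol := holder_gmap K hK
  have himg := hHol.dimH_image_le hα0
  have h3 : (1:ℝ≥0∞) ≤ dimH (gmap '' EE) := by
    have hIcc : dimH (Set.Icc (0:ℝ) 1) = 1 := by
      rw [Real.dimH_of_mem_nhds (Icc_mem_nhds (show (0:ℝ) < 1/2 by norm_num)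
        (show (1:ℝ)/2 < 1 by norm_num))]
      simp
    calc (1:ℝ≥0∞) = dimH (Set.Icc (0:ℝ) 1) := hIcc.symm
      _ ≤ dimH (gmap '' EE) := dimH_mono Icc_subset_gmap
  have h4 : (α : ℝ≥0∞) ≤ dimH EE := by
    have h5 : (1:ℝ≥0∞) ≤ dimH EE / α := le_trans h3 himg
    calc (α:ℝ≥0∞) = α * 1 := (mul_one _).symm
      _ ≤ α * (dimH EE / α) := mul_le_mul_right h5 _
      _ = dimH EE := ENNReal.mul_div_cancel (by exact_mod_cast hα0.ne') ENNReal.coe_ne_top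
  refine le_trans ?_ h4
  have hρα' : ρ ≤ α := by
    rw [← NNReal.coe_le_coe, hαcoe]
    exact hρα
  exact_mod_cast hρα'

@[reducible] noncomputable def tMet : TopologicalSpace (LaurentSeries F3) :=
  @UniformSpace.toTopologicalSpace _ (@PseudoEMetricSpace.toUniformSpace _ inferInstance)

lemma dimH_EE_le : dimH EE ≤ 1 := by
  refine le_trans (dimH_mono (Set.image_subset_range _ _)) ?_
  letI mI : MeasurableSpace (LaurentSeries F3) := @borel _ tMet
  haveI bI : @BorelSpace (LaurentSeries F3) tMet mI := @BorelSpace.mk _ tMet mI rfl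
  apply dimH_le
  intro d' hd'
  by_contra hgt
  push_neg at hgt
  have hd : (1:ℝ) < (d' : ℝ) := by exact_mod_cast hgt
  set d : ℝ := (d' : ℝ) with hddef
  set b : ℝ := 3 * (3:ℝ)⁻¹ ^ d with hb
  have hbb : (3:ℝ)⁻¹ ^ d < (3:ℝ)⁻¹ := by
    have h := Real.rpow_lt_rpow_of_exponent_gt (show (0:ℝ) < 3⁻¹ by norm_num)
      (show (3:ℝ)⁻¹ < 1 by norm_num) hd
    rwa [Real.rpow_one] at h
  have hb0 : 0 ≤ b := by
    rw [hb]
    have := Real.rpow_nonneg (show (0:ℝ) ≤ 3⁻¹ by norm_num) d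
    linarith
  have hb1 : b < 1 := by
    rw [hb]
    nlinarith
  have hcover := MeasureTheory.Measure.hausdorffMeasure_le_liminf_tsum (ι := fun n : ℕ => Fin n → F3) d
      (Set.range (emb : PowerSeries F3 → LaurentSeries F3))
      (l := atTop)
      (fun n => ENNReal.ofReal ((3:ℝ)⁻¹ ^ n))
      (by
        rw [show (0:ℝ≥0∞) = ENNReal.ofReal 0 from by simp]
        exact (ENNReal.continuous_ofReal.tendsto 0).comp
          (tendsto_pow_atTop_nhds_zero_of_lt_one (by norm_num) (by norm_num)))
      (fun n v => (emb : PowerSeries F3 → LaurentSeries F3) ''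
        { p | ∀ m : Fin n, PowerSeries.coeff m p = v m })
      (by
        apply Eventually.of_forall
        intro n v
        apply EMetric.diam_le
        rintro x ⟨p, hp, rfl⟩ y ⟨q, hq, rfl⟩
        rw [edist_dist]
        apply ENNReal.ofReal_le_ofReal
        apply dist_le_of_agree
        intro m' hm'
        have h1 := hp ⟨m', hm'⟩
        have h2 := hq ⟨m', hm'⟩
        simp only at h1 h2
        rw [h1, h2])
      (by
        apply Eventually.of_forall
        intro n
        rintro x ⟨p, rfl⟩
        exact Set.mem_iUnion.mpr ⟨fun m => PowerSeries.coeff m p, ⟨p, fun m => rfl, rfl⟩⟩)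
  have hle : ∀ n : ℕ, (∑' v : Fin n → F3, EMetric.diam
      ((emb : PowerSeries F3 → LaurentSeries F3) ''
        { p | ∀ m : Fin n, PowerSeries.coeff m p = v m }) ^ d)
      ≤ ENNReal.ofReal (b ^ n) := by
    intro n
    have hdiam : ∀ v : Fin n → F3, EMetric.diam
        ((emb : PowerSeries F3 → LaurentSeries F3) ''
          { p | ∀ m : Fin n, PowerSeries.coeff m p = v m })
        ≤ ENNReal.ofReal ((3:ℝ)⁻¹ ^ n) := by
      intro v
      apply EMetric.diam_le
      rintro x ⟨p, hp, rfl⟩ y ⟨q, hq, rfl⟩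
      rw [edist_dist]
      apply ENNReal.ofReal_le_ofReal
      apply dist_le_of_agree
      intro m' hm'
      have h1 := hp ⟨m', hm'⟩
      have h2 := hq ⟨m', hm'⟩
      simp only at h1 h2
      rw [h1, h2]
    have hcard : Fintype.card (Fin n → F3) = 3 ^ n := by
      simp [ZMod.card]
    calc (∑' v : Fin n → F3, EMetric.diam
        ((emb : PowerSeries F3 → LaurentSeries F3) ''
          { p | ∀ m : Fin n, PowerSeries.coeff m p = v m }) ^ d)
        ≤ ∑' _v : Fin n → F3, ENNReal.ofReal ((3:ℝ)⁻¹ ^ n) ^ d := by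
          apply ENNReal.tsum_le_tsum
          intro v
          exact ENNReal.rpow_le_rpow (hdiam v) (by linarith)
      _ = (Fintype.card (Fin n → F3) : ℝ≥0∞) * ENNReal.ofReal ((3:ℝ)⁻¹ ^ n) ^ d := by
          rw [tsum_fintype, Finset.sum_const, Finset.card_univ, nsmul_eq_mul]
      _ = ENNReal.ofReal (b ^ n) := by
          rw [ENNReal.ofReal_rpow_of_pos (by positivity), hcard]
          rw [show ((3 ^ n : ℕ) : ℝ≥0∞) = ENNReal.ofReal ((3:ℝ) ^ n) from by
            rw [ENNReal.ofReal_pow (by norm_num)]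
            norm_num]
          rw [← ENNReal.ofReal_mul (by positivity)]
          congr 1
          rw [hb, mul_pow]
          congr 1
          rw [← Real.rpow_natCast ((3:ℝ)⁻¹ ^ d) n, ← Real.rpow_natCast ((3:ℝ)⁻¹) n,
            ← Real.rpow_mul (by norm_num), ← Real.rpow_mul (by norm_num), mul_comm]
  have hlim : liminf (fun n => ∑' v : Fin n → F3, EMetric.diam
        ((emb : PowerSeries F3 → LaurentSeries F3) ''
          { p | ∀ m : Fin n, PowerSeries.coeff m p = v m }) ^ d) atTop = 0 := by
    refine le_antisymm ?_ zero_le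
    calc liminf (fun n => ∑' v : Fin n → F3, EMetric.diam
          ((emb : PowerSeries F3 → LaurentSeries F3) ''
            { p | ∀ m : Fin n, PowerSeries.coeff m p = v m }) ^ d) atTop
        ≤ liminf (fun n => ENNReal.ofReal (b ^ n)) atTop :=
          liminf_le_liminf (Eventually.of_forall hle)
      _ = 0 := by
          have ht : Tendsto (fun n : ℕ => ENNReal.ofReal (b ^ n)) atTop (𝓝 0) := by
            rw [show (0:ℝ≥0∞) = ENNReal.ofReal 0 from by simp]
            exact (ENNReal.continuous_ofReal.tendsto 0).comp
              (tendsto_pow_atTop_nhds_zero_of_lt_one hb0 hb1)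
          exact ht.liminf_eq
  have h0 := le_antisymm (hcover.trans hlim.le) zero_le
  rw [h0] at hd'
  exact ENNReal.zero_ne_top hd'

end

end CapsetCE

/-- **A counterexample to a limiting Hausdorff-dimension version of the capset problem.**
There is a subset `E` of the power series ring `𝔽₃⟦t⟧ ⊆ 𝔽₃((t))` of Hausdorff dimension `1`
containing no three distinct points `x, y, z` with `x + y + z = 0` (equivalently `x + z = 2y`,
since the characteristic is `3`); so no Hausdorff-dimension analogue of the capset theorem
holds in this limiting setting. -/
theorem capset_counterexample_in_F3_power_series :
    ∃ E : Set (LaurentSeries (ZMod 3)),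
      E ⊆ Set.range
        ((HahnSeries.ofPowerSeries ℤ (ZMod 3)) :
          PowerSeries (ZMod 3) → LaurentSeries (ZMod 3)) ∧
      dimH E = 1 ∧
      ¬ ∃ x y z : LaurentSeries (ZMod 3), x ∈ E ∧ y ∈ E ∧ z ∈ E ∧
        x ≠ y ∧ y ≠ z ∧ x ≠ z ∧ x + y + z = 0 := by
  exact ⟨CapsetCE.EE, Set.image_subset_range _ _,
    le_antisymm CapsetCE.dimH_EE_le CapsetCE.one_le_dimH_EE, CapsetCE.no_ap⟩
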